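/- Let M = M1 ⊕ M2 be the direct sum of two matroids represented over a field F by matrices A1 (with r1 rows) and A2 (with r2 rows). Let T = {I1, ..., It} be a collection of 3-element independent sets of M, each containing exactly 2 elements from the ground set of M1 and exactly 1 element from the ground set of M2. If t > C(r1, 2) · C(r2, 1), then there exists some Il ∈ T such that for every independent set B of M of size at most r1 + r2 - 3: if some Ii ∈ T extends B, then some Ij ∈ T \ {Il} extends B. (Here A extends B means A ∩ B = ∅ and A ∪ B is independent.) -/

import Mathlib

open Function Set Finset


lemma exists_alt {F : Type} [Field F] {V : Type*} [AddCommGroup V] [Module F V] {k : ℕ}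
    (v : Fin k → V) (hv : LinearIndependent F v) :
    ∃ ω : V [⋀^Fin k]→ₗ[F] F, ω v = 1 := by
  classical
  set W := Submodule.span F (Set.range v) with hW
  let b : Module.Basis (Fin k) F W := Module.Basis.span hv
  obtain ⟨W', hW'⟩ := Submodule.exists_isCompl W
  let proj : V →ₗ[F] W := W.linearProjOfIsCompl W' hW'
  let f : V →ₗ[F] (Fin k → F) :=
    (Finsupp.linearEquivFunOnFinite F F (Fin k)).toLinearMap ∘ₗ
      (b.repr : W →ₗ[F] (Fin k →₀ F)) ∘ₗ proj
  have hfv : ∀ i, f (v i) = Pi.basisFun F (Fin k) i := by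
    intro i
    have hmem : v i ∈ W := Submodule.subset_span (mem_range_self i)
    have h1 : proj (v i) = b i := by
      have h2 : proj (v i) = (⟨v i, hmem⟩ : W) :=
        Submodule.linearProjOfIsCompl_apply_left hW' ⟨v i, hmem⟩
      rw [h2]
      ext
      exact congrArg Subtype.val (Module.Basis.span_apply hv i).symm
    show (Finsupp.linearEquivFunOnFinite F F (Fin k)) (b.repr (proj (v i))) = _
    rw [h1, Module.Basis.repr_self, Pi.basisFun_apply]
    ext j
    simp [Finsupp.single_eq_pi_single]
  refine ⟨(Pi.basisFun F (Fin k)).det.compLinearMap f, ?_⟩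
  rw [AlternatingMap.compLinearMap_apply]
  have : (fun i => f (v i)) = ⇑(Pi.basisFun F (Fin k)) := funext hfv
  rw [this, Module.Basis.det_self]

lemma indep_decomp {F : Type} [Field F] {U1 U2 : Type} {r1 r2 : ℕ}
    (A1 : U1 → (Fin r1 → F)) (A2 : U2 → (Fin r2 → F))
    (φ : U1 ⊕ U2 → (Fin r1 → F) × (Fin r2 → F))
    (hφ1 : ∀ u : U1, φ (Sum.inl u) = (A1 u, 0))
    (hφ2 : ∀ u : U2, φ (Sum.inr u) = (0, A2 u))
    (X : Set (U1 ⊕ U2)) :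
    LinearIndependent F (fun x : X => φ x.1) ↔
      (LinearIndependent F (fun u : {u : U1 | Sum.inl u ∈ X} => A1 u.1) ∧
       LinearIndependent F (fun u : {u : U2 | Sum.inr u ∈ X} => A2 u.1)) := by
  classical
  let e : ({u : U1 | Sum.inl u ∈ X} ⊕ {u : U2 | Sum.inr u ∈ X}) ≃ X :=
    { toFun := Sum.elim (fun u => ⟨Sum.inl u.1, u.2⟩) (fun u => ⟨Sum.inr u.1, u.2⟩)
      invFun := fun x => match x with
        | ⟨Sum.inl u, h⟩ => Sum.inl ⟨u, h⟩
        | ⟨Sum.inr u, h⟩ => Sum.inr ⟨u, h⟩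
      left_inv := by rintro (⟨u, h⟩ | ⟨u, h⟩) <;> rfl
      right_inv := by rintro ⟨(u | u), h⟩ <;> rfl }
  rw [← linearIndependent_equiv e]
  have hcomp : (fun x : X => φ x.1) ∘ e =
      Sum.elim (fun u : {u : U1 | Sum.inl u ∈ X} => ((A1 u.1, 0) : (Fin r1 → F) × (Fin r2 → F)))
        (fun u : {u : U2 | Sum.inr u ∈ X} => ((0, A2 u.1) : (Fin r1 → F) × (Fin r2 → F))) := by
    funext x
    rcases x with (⟨u, h⟩ | ⟨u, h⟩)
    · exact hφ1 u
    · exact hφ2 u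
  rw [hcomp, linearIndependent_sum]
  have h1 : (Sum.elim (fun u : {u : U1 | Sum.inl u ∈ X} => ((A1 u.1, 0) : (Fin r1 → F) × (Fin r2 → F)))
      (fun u : {u : U2 | Sum.inr u ∈ X} => ((0, A2 u.1) : (Fin r1 → F) × (Fin r2 → F)))) ∘ Sum.inl
      = (LinearMap.inl F (Fin r1 → F) (Fin r2 → F)) ∘ (fun u : {u : U1 | Sum.inl u ∈ X} => A1 u.1) := rfl
  have h2 : (Sum.elim (fun u : {u : U1 | Sum.inl u ∈ X} => ((A1 u.1, 0) : (Fin r1 → F) × (Fin r2 → F)))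
      (fun u : {u : U2 | Sum.inr u ∈ X} => ((0, A2 u.1) : (Fin r1 → F) × (Fin r2 → F)))) ∘ Sum.inr
      = (LinearMap.inr F (Fin r1 → F) (Fin r2 → F)) ∘ (fun u : {u : U2 | Sum.inr u ∈ X} => A2 u.1) := rfl
  rw [h1, h2,
    (LinearMap.inl F (Fin r1 → F) (Fin r2 → F)).linearIndependent_iff (Submodule.ker_inl),
    (LinearMap.inr F (Fin r1 → F) (Fin r2 → F)).linearIndependent_iff (Submodule.ker_inr)]
  have hdisj : Disjoint
      (Submodule.span F (range ((LinearMap.inl F (Fin r1 → F) (Fin r2 → F)) ∘ (fun u : {u : U1 | Sum.inl u ∈ X} => A1 u.1))))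
      (Submodule.span F (range ((LinearMap.inr F (Fin r1 → F) (Fin r2 → F)) ∘ (fun u : {u : U2 | Sum.inr u ∈ X} => A2 u.1)))) := by
    refine Disjoint.mono ?_ ?_ (LinearMap.isCompl_range_inl_inr (R := F) (M := Fin r1 → F) (M₂ := Fin r2 → F)).disjoint
    · rw [Submodule.span_le]
      rintro _ ⟨u, rfl⟩
      exact LinearMap.mem_range_self _ _
    · rw [Submodule.span_le]
      rintro _ ⟨u, rfl⟩
      exact LinearMap.mem_range_self _ _
  tauto

variable {F : Type} [Field F] {r n : ℕ}

private noncomputable def Gmap (ω : (Fin r → F) [⋀^Fin (n+2)]→ₗ[F] F) (u : Fin n → (Fin r → F)) :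
    (Fin r → F) →ₗ[F] (Fin r → F) →ₗ[F] F where
  toFun a :=
    { toFun := fun b => ((ω.curryLeft a).curryLeft b) u
      map_add' := by intros; simp
      map_smul' := by intros; simp }
  map_add' a a' := by ext b; simp
  map_smul' s a := by ext b; simp

lemma Gmap_apply (ω : (Fin r → F) [⋀^Fin (n+2)]→ₗ[F] F) (u : Fin n → (Fin r → F))
    (a b : Fin r → F) : Gmap ω u a b = ω (Fin.cons a (Fin.cons b u)) := rfl

lemma Gmap_same (ω : (Fin r → F) [⋀^Fin (n+2)]→ₗ[F] F) (u : Fin n → (Fin r → F))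
    (a : Fin r → F) : Gmap ω u a a = 0 := by
  show ((ω.curryLeft a).curryLeft a) u = 0
  rw [AlternatingMap.curryLeft_same]
  rfl

lemma Gmap_swap (ω : (Fin r → F) [⋀^Fin (n+2)]→ₗ[F] F) (u : Fin n → (Fin r → F))
    (a b : Fin r → F) : Gmap ω u b a = - Gmap ω u a b := by
  rw [Gmap_apply, Gmap_apply]
  have key : (Fin.cons a (Fin.cons b u) : Fin (n+2) → (Fin r → F)) ∘ Equiv.swap 0 1
      = Fin.cons b (Fin.cons a u) := by
    funext i
    simp only [Function.comp_apply]
    refine Fin.cases ?_ (fun j => ?_) i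
    · rw [Equiv.swap_apply_left, ← Fin.succ_zero_eq_one, Fin.cons_succ, Fin.cons_zero,
        Fin.cons_zero]
    · refine Fin.cases ?_ (fun k => ?_) j
      · rw [Fin.succ_zero_eq_one, Equiv.swap_apply_right, Fin.cons_zero,
          ← Fin.succ_zero_eq_one, Fin.cons_succ, Fin.cons_zero]
      · have h0 : (Fin.succ (Fin.succ k) : Fin (n+2)) ≠ 0 := Fin.succ_ne_zero _
        have h1 : (Fin.succ (Fin.succ k) : Fin (n+2)) ≠ 1 := by
          rw [← Fin.succ_zero_eq_one]
          exact fun h => Fin.succ_ne_zero _ (Fin.succ_injective _ h)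
        rw [Equiv.swap_apply_of_ne_of_ne h0 h1, Fin.cons_succ, Fin.cons_succ, Fin.cons_succ,
          Fin.cons_succ]
  rw [← key]
  exact AlternatingMap.map_swap ω _ (Fin.zero_ne_one (n := n))

lemma pi_single_expand (x : Fin r → F) : x = ∑ p, x p • (Pi.single p 1 : Fin r → F) := by
  ext j
  simp [Finset.sum_apply, Pi.single_apply]

lemma alt_expand (ω : (Fin r → F) [⋀^Fin (n+2)]→ₗ[F] F) (u : Fin n → (Fin r → F))
    (x y : Fin r → F) :
    ω (Fin.cons x (Fin.cons y u)) =
      ∑ pq ∈ Finset.univ.filter (fun pq : Fin r × Fin r => pq.1 < pq.2),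
        (x pq.1 * y pq.2 - x pq.2 * y pq.1) *
          ω (Fin.cons (Pi.single pq.1 1) (Fin.cons (Pi.single pq.2 1) u)) := by
  classical
  set e : Fin r → (Fin r → F) := fun p => Pi.single p (1:F) with he
  have h1 : Gmap ω u x = ∑ p, x p • Gmap ω u (e p) := by
    conv_lhs => rw [pi_single_expand x]
    rw [map_sum]
    exact Finset.sum_congr rfl fun p _ => by rw [map_smul]
  have h2 : ∀ p, Gmap ω u (e p) y = ∑ q, y q • Gmap ω u (e p) (e q) := by
    intro p
    conv_lhs => rw [pi_single_expand y]
    rw [map_sum]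
    exact Finset.sum_congr rfl fun q _ => by rw [map_smul]
  have step1 : ω (Fin.cons x (Fin.cons y u)) =
      ∑ pq ∈ (Finset.univ ×ˢ Finset.univ : Finset (Fin r × Fin r)),
        (x pq.1 * y pq.2) * Gmap ω u (e pq.1) (e pq.2) := by
    rw [← Gmap_apply, Finset.sum_product]
    show (Gmap ω u x) y = _
    rw [h1, LinearMap.sum_apply]
    refine Finset.sum_congr rfl fun p _ => ?_
    rw [LinearMap.smul_apply, h2 p, Finset.smul_sum]
    refine Finset.sum_congr rfl fun q _ => ?_
    rw [smul_smul, smul_eq_mul]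
  rw [step1]
  rw [← Finset.univ_product_univ]
  rw [← Finset.sum_filter_add_sum_filter_not (Finset.univ ×ˢ Finset.univ)
    (fun pq : Fin r × Fin r => pq.1 < pq.2)]
  have hnot : ∑ pq ∈ (Finset.univ ×ˢ Finset.univ : Finset (Fin r × Fin r)).filter
        (fun pq => ¬ pq.1 < pq.2), (x pq.1 * y pq.2) * Gmap ω u (e pq.1) (e pq.2)
      = ∑ pq ∈ (Finset.univ ×ˢ Finset.univ : Finset (Fin r × Fin r)).filter
        (fun pq => pq.1 < pq.2), -((x pq.2 * y pq.1) * Gmap ω u (e pq.1) (e pq.2)) := by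
    rw [← Finset.sum_filter_add_sum_filter_not
      ((Finset.univ ×ˢ Finset.univ : Finset (Fin r × Fin r)).filter (fun pq => ¬ pq.1 < pq.2))
      (fun pq : Fin r × Fin r => pq.2 < pq.1)]
    have hz : ∑ pq ∈ ((Finset.univ ×ˢ Finset.univ : Finset (Fin r × Fin r)).filter
        (fun pq => ¬ pq.1 < pq.2)).filter (fun pq => ¬ pq.2 < pq.1),
        (x pq.1 * y pq.2) * Gmap ω u (e pq.1) (e pq.2) = 0 := by
      refine Finset.sum_eq_zero fun pq hpq => ?_
      simp only [Finset.mem_filter] at hpq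
      have heq : pq.1 = pq.2 := le_antisymm (not_lt.mp hpq.2) (not_lt.mp hpq.1.2)
      rw [heq, Gmap_same, mul_zero]
    rw [hz, add_zero]
    refine Finset.sum_nbij' (fun pq => (pq.2, pq.1)) (fun pq => (pq.2, pq.1)) ?_ ?_ ?_ ?_ ?_
    · rintro ⟨p, q⟩ h
      simp only [Finset.mem_filter, Finset.mem_product, Finset.mem_univ, true_and] at h ⊢
      exact h.2
    · rintro ⟨p, q⟩ h
      simp only [Finset.mem_filter, Finset.mem_product, Finset.mem_univ, true_and] at h ⊢
      exact ⟨not_lt.mpr (le_of_lt h), h⟩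
    · rintro ⟨p, q⟩ _; rfl
    · rintro ⟨p, q⟩ _; rfl
    · rintro ⟨p, q⟩ h
      show (x p * y q) * Gmap ω u (e p) (e q) = -((x p * y q) * Gmap ω u (e q) (e p))
      rw [Gmap_swap ω u (e q) (e p)]
      ring
  rw [hnot, ← Finset.sum_add_distrib]
  refine Finset.sum_congr rfl fun pq hpq => ?_
  show (x pq.1 * y pq.2) * Gmap ω u (e pq.1) (e pq.2)
      + -((x pq.2 * y pq.1) * Gmap ω u (e pq.1) (e pq.2))
    = (x pq.1 * y pq.2 - x pq.2 * y pq.1) * Gmap ω u (e pq.1) (e pq.2)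
  ring

lemma card_lt_pairs (r : ℕ) : Fintype.card {pq : Fin r × Fin r // pq.1 < pq.2} = r.choose 2 := by
  classical
  let eq1 : {pq : Fin r × Fin r // pq.1 < pq.2} ≃ Σ q : Fin r, {p : Fin r // p < q} :=
    { toFun := fun x => ⟨x.1.2, x.1.1, x.2⟩
      invFun := fun x => ⟨(x.2.1, x.1), x.2.2⟩
      left_inv := fun ⟨⟨p, q⟩, h⟩ => rfl
      right_inv := fun ⟨q, p, h⟩ => rfl }
  rw [Fintype.card_congr eq1, Fintype.card_sigma]
  have hcard : ∀ q : Fin r, Fintype.card {p : Fin r // p < q} = q.val := fun q => by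
    rw [Fintype.card_of_subtype (Finset.Iio q) (fun x => Finset.mem_Iio), Fin.card_Iio]
  simp_rw [hcard]
  rw [Nat.choose_two_right, ← Finset.sum_range_id r, Fin.sum_univ_eq_sum_range (fun i => i) r]

private noncomputable def G1map {F : Type} [Field F] {r n : ℕ}
    (ω : (Fin r → F) [⋀^Fin (n+1)]→ₗ[F] F) (u : Fin n → (Fin r → F)) :
    (Fin r → F) →ₗ[F] F where
  toFun z := (ω.curryLeft z) u
  map_add' := by intros; simp
  map_smul' := by intros; simp

lemma G1_expand {F : Type} [Field F] {r n : ℕ}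
    (ω : (Fin r → F) [⋀^Fin (n+1)]→ₗ[F] F) (u : Fin n → (Fin r → F)) (z : Fin r → F) :
    ω (Fin.cons z u) = ∑ s, z s * ω (Fin.cons (Pi.single s 1) u) := by
  have h0 : ω (Fin.cons z u) = G1map ω u z := rfl
  rw [h0]
  conv_lhs => rw [pi_single_expand z]
  rw [map_sum]
  exact Finset.sum_congr rfl fun s _ => by rw [map_smul, smul_eq_mul]; rfl

lemma comp_cons {α β : Type*} {n : ℕ} (g : α → β) (x : α) (f : Fin n → α) :
    (fun k : Fin (n+1) => g ((Fin.cons x f : Fin (n+1) → α) k)) = Fin.cons (g x) (fun k => g (f k)) := by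
  funext k
  refine Fin.cases ?_ (fun p => ?_) k
  · rw [Fin.cons_zero, Fin.cons_zero]
  · rw [Fin.cons_succ, Fin.cons_succ]

lemma comp_cons2 {α β : Type*} {n : ℕ} (g : α → β) (x y : α) (f : Fin n → α) :
    (fun k : Fin (n+2) => g ((Fin.cons x (Fin.cons y f) : Fin (n+2) → α) k)) =
      Fin.cons (g x) (Fin.cons (g y) (fun k => g (f k))) := by
  rw [comp_cons, comp_cons g y f]

set_option maxHeartbeats 2000000 in
/-- Representative sets in a direct sum `M = M1 ⊕ M2` of linearly represented matroids
(`A1` with `r1` rows, `A2` with `r2` rows): given `t > C(r1,2)·C(r2,1)` independent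
3-sets, each with two elements from the ground set of `M1` and one from `M2`, one of
them (`I l`) can be dropped: any independent `B` with `|B| ≤ r1 + r2 - 3` extended by
some member of the collection is extended by some member other than `I l`. -/
theorem stmt5 {F : Type} [Field F] {U1 U2 : Type} (r1 r2 : ℕ)
    (A1 : U1 → (Fin r1 → F)) (A2 : U2 → (Fin r2 → F)) (t : ℕ)
    -- the representation of M = M1 ⊕ M2 by diag(A1, A2):
    (φ : U1 ⊕ U2 → (Fin r1 → F) × (Fin r2 → F))
    (hφ1 : ∀ u : U1, φ (Sum.inl u) = (A1 u, 0))
    (hφ2 : ∀ u : U2, φ (Sum.inr u) = (0, A2 u))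
    -- independence in M:
    (Indep : Set (U1 ⊕ U2) → Prop)
    (hIndep : ∀ X : Set (U1 ⊕ U2),
      Indep X ↔ LinearIndependent F (fun x : X => φ x.1))
    -- the collection of t independent 3-sets, two elements from U1 and one from U2:
    (a b : Fin t → U1) (c : Fin t → U2) (hab : ∀ i, a i ≠ b i)
    (I : Fin t → Set (U1 ⊕ U2))
    (hI : ∀ i, I i = {Sum.inl (a i), Sum.inl (b i), Sum.inr (c i)})
    (hIindep : ∀ i, Indep (I i))
    (hIinj : Function.Injective I)
    (ht : Nat.choose r1 2 * Nat.choose r2 1 < t) :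
    ∃ l : Fin t, ∀ B : Set (U1 ⊕ U2), Indep B → B.ncard ≤ r1 + r2 - 3 →
      (∃ i, Disjoint (I i) B ∧ Indep (I i ∪ B)) →
      (∃ j, j ≠ l ∧ Disjoint (I j) B ∧ Indep (I j ∪ B)) := by
  classical
  -- the "wedge coordinate" vectors
  let w : Fin t → (({pq : Fin r1 × Fin r1 // pq.1 < pq.2} × Fin r2) → F) := fun i z =>
    (A1 (a i) z.1.1.1 * A1 (b i) z.1.1.2 - A1 (a i) z.1.1.2 * A1 (b i) z.1.1.1) * A2 (c i) z.2
  have hnotli : ¬ LinearIndependent F w := by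
    intro h
    have h1 := h.fintype_card_le_finrank
    rw [Module.finrank_pi, Fintype.card_fin, Fintype.card_prod, card_lt_pairs,
      Fintype.card_fin] at h1
    rw [Nat.choose_one_right] at ht
    omega
  obtain ⟨g, hg0, l, hgl⟩ := Fintype.not_linearIndependent_iff.mp hnotli
  refine ⟨l, fun B hB _ hext => ?_⟩
  obtain ⟨i0, hdisj0, hind0⟩ := hext
  by_cases hi0 : i0 = l
  swap
  · exact ⟨i0, hi0, hdisj0, hind0⟩
  rw [hi0] at hdisj0 hind0
  clear hi0
  -- decompose B
  obtain ⟨hS1, hS2⟩ := (indep_decomp A1 A2 φ hφ1 hφ2 B).mp ((hIndep B).mp hB)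
  haveI : Finite {u : U1 | Sum.inl u ∈ B} := hS1.finite
  haveI : Finite {u : U2 | Sum.inr u ∈ B} := hS2.finite
  haveI : Fintype {u : U1 | Sum.inl u ∈ B} := Fintype.ofFinite _
  haveI : Fintype {u : U2 | Sum.inr u ∈ B} := Fintype.ofFinite _
  set m1 := Fintype.card {u : U1 | Sum.inl u ∈ B} with hm1
  set m2 := Fintype.card {u : U2 | Sum.inr u ∈ B} with hm2
  let f1 : Fin m1 ≃ {u : U1 | Sum.inl u ∈ B} := (Fintype.equivFin _).symm
  let f2 : Fin m2 ≃ {u : U2 | Sum.inr u ∈ B} := (Fintype.equivFin _).symm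
  let u1 : Fin m1 → U1 := fun k => (f1 k).1
  let u2 : Fin m2 → U2 := fun k => (f2 k).1
  let uu1 : Fin m1 → (Fin r1 → F) := fun k => A1 (u1 k)
  let uu2 : Fin m2 → (Fin r2 → F) := fun k => A2 (u2 k)
  have huu1 : LinearIndependent F uu1 := (linearIndependent_equiv f1).mpr hS1
  have huu2 : LinearIndependent F uu2 := (linearIndependent_equiv f2).mpr hS2
  have hu1mem : ∀ k, Sum.inl (u1 k) ∈ B := fun k => (f1 k).2
  have hu2mem : ∀ k, Sum.inr (u2 k) ∈ B := fun k => (f2 k).2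
  have hu1surj : ∀ u, Sum.inl u ∈ B → ∃ k, u1 k = u := fun u hu =>
    ⟨f1.symm ⟨u, hu⟩, congrArg Subtype.val (f1.apply_symm_apply ⟨u, hu⟩)⟩
  have hu2surj : ∀ u, Sum.inr u ∈ B → ∃ k, u2 k = u := fun u hu =>
    ⟨f2.symm ⟨u, hu⟩, congrArg Subtype.val (f2.apply_symm_apply ⟨u, hu⟩)⟩
  have hu1inj : Function.Injective u1 := fun k k' h => f1.injective (Subtype.ext h)
  have hu2inj : Function.Injective u2 := fun k k' h => f2.injective (Subtype.ext h)
  -- membership facts for I l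
  have hal : Sum.inl (a l) ∈ I l := by rw [hI l]; left; rfl
  have hbl : Sum.inl (b l) ∈ I l := by rw [hI l]; right; left; rfl
  have hcl : Sum.inr (c l) ∈ I l := by rw [hI l]; right; right; rfl
  have halB : Sum.inl (a l) ∉ B := fun h => Set.disjoint_left.mp hdisj0 hal h
  have hblB : Sum.inl (b l) ∉ B := fun h => Set.disjoint_left.mp hdisj0 hbl h
  have hclB : Sum.inr (c l) ∉ B := fun h => Set.disjoint_left.mp hdisj0 hcl h
  -- decompose I l ∪ B
  obtain ⟨hX1, hX2⟩ := (indep_decomp A1 A2 φ hφ1 hφ2 (I l ∪ B)).mp ((hIndep _).mp hind0)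
  -- transfer to a Fin-indexed family
  have hψ1mem : ∀ k : Fin (m1+2),
      Sum.inl ((Fin.cons (a l) (Fin.cons (b l) u1) : Fin (m1+2) → U1) k) ∈ I l ∪ B := by
    refine Fin.cases ?_ (fun p => ?_) <;> try exact Or.inl hal
    rw [Fin.cons_succ]
    refine Fin.cases ?_ (fun q => ?_) p
    · rw [Fin.cons_zero]; exact Or.inl hbl
    · rw [Fin.cons_succ]; exact Or.inr (hu1mem q)
  have hψ2mem : ∀ k : Fin (m2+1),
      Sum.inr ((Fin.cons (c l) u2 : Fin (m2+1) → U2) k) ∈ I l ∪ B := by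
    refine Fin.cases ?_ (fun p => ?_)
    · rw [Fin.cons_zero]; exact Or.inl hcl
    · rw [Fin.cons_succ]; exact Or.inr (hu2mem p)
  have hψ1inj : Function.Injective (Fin.cons (a l) (Fin.cons (b l) u1) : Fin (m1+2) → U1) := by
    rw [Fin.cons_injective_iff]
    constructor
    · rintro ⟨p, hp⟩
      revert hp
      refine Fin.cases ?_ (fun q => ?_) p
      · rw [Fin.cons_zero]; exact fun h => hab l h.symm
      · rw [Fin.cons_succ]; exact fun h => halB (h ▸ hu1mem q)
    · rw [Fin.cons_injective_iff]
      refine ⟨?_, hu1inj⟩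
      rintro ⟨q, hq⟩
      exact hblB (hq ▸ hu1mem q)
  have hψ2inj : Function.Injective (Fin.cons (c l) u2 : Fin (m2+1) → U2) := by
    rw [Fin.cons_injective_iff]
    refine ⟨?_, hu2inj⟩
    rintro ⟨q, hq⟩
    exact hclB (hq ▸ hu2mem q)
  have hv1 : LinearIndependent F (Fin.cons (A1 (a l)) (Fin.cons (A1 (b l)) uu1)) := by
    have h := hX1.comp
      (fun k : Fin (m1+2) => (⟨(Fin.cons (a l) (Fin.cons (b l) u1) : Fin (m1+2) → U1) k,
        hψ1mem k⟩ : {u : U1 | Sum.inl u ∈ I l ∪ B}))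
      (fun k k' hkk' => hψ1inj (congrArg Subtype.val hkk'))
    have heq : ((fun u : {u : U1 | Sum.inl u ∈ I l ∪ B} => A1 u.1) ∘
        (fun k : Fin (m1+2) => (⟨(Fin.cons (a l) (Fin.cons (b l) u1) : Fin (m1+2) → U1) k,
          hψ1mem k⟩ : {u : U1 | Sum.inl u ∈ I l ∪ B}))) =
        Fin.cons (A1 (a l)) (Fin.cons (A1 (b l)) uu1) := by
      rw [show ((fun u : {u : U1 | Sum.inl u ∈ I l ∪ B} => A1 u.1) ∘
        (fun k : Fin (m1+2) => (⟨(Fin.cons (a l) (Fin.cons (b l) u1) : Fin (m1+2) → U1) k,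
          hψ1mem k⟩ : {u : U1 | Sum.inl u ∈ I l ∪ B}))) =
        (fun k : Fin (m1+2) => A1 ((Fin.cons (a l) (Fin.cons (b l) u1) : Fin (m1+2) → U1) k))
        from rfl, comp_cons2]
    rwa [heq] at h
  have hv2 : LinearIndependent F (Fin.cons (A2 (c l)) uu2) := by
    have h := hX2.comp
      (fun k : Fin (m2+1) => (⟨(Fin.cons (c l) u2 : Fin (m2+1) → U2) k,
        hψ2mem k⟩ : {u : U2 | Sum.inr u ∈ I l ∪ B}))
      (fun k k' hkk' => hψ2inj (congrArg Subtype.val hkk'))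
    have heq : ((fun u : {u : U2 | Sum.inr u ∈ I l ∪ B} => A2 u.1) ∘
        (fun k : Fin (m2+1) => (⟨(Fin.cons (c l) u2 : Fin (m2+1) → U2) k,
          hψ2mem k⟩ : {u : U2 | Sum.inr u ∈ I l ∪ B}))) =
        Fin.cons (A2 (c l)) uu2 := by
      rw [show ((fun u : {u : U2 | Sum.inr u ∈ I l ∪ B} => A2 u.1) ∘
        (fun k : Fin (m2+1) => (⟨(Fin.cons (c l) u2 : Fin (m2+1) → U2) k,
          hψ2mem k⟩ : {u : U2 | Sum.inr u ∈ I l ∪ B}))) =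
        (fun k : Fin (m2+1) => A2 ((Fin.cons (c l) u2 : Fin (m2+1) → U2) k))
        from rfl, comp_cons]
    rwa [heq] at h
  obtain ⟨ω1, hω1⟩ := exists_alt _ hv1
  obtain ⟨ω2, hω2⟩ := exists_alt _ hv2
  -- the pairing functional
  let βc : {pq : Fin r1 × Fin r1 // pq.1 < pq.2} → F := fun pq =>
    ω1 (Fin.cons (Pi.single pq.1.1 1) (Fin.cons (Pi.single pq.1.2 1) uu1))
  let γc : Fin r2 → F := fun s => ω2 (Fin.cons (Pi.single s 1) uu2)
  let L : (({pq : Fin r1 × Fin r1 // pq.1 < pq.2} × Fin r2) → F) →ₗ[F] F :=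
    { toFun := fun f => ∑ z, f z * (βc z.1 * γc z.2)
      map_add' := by
        intro f f'
        simp [add_mul, Finset.sum_add_distrib]
      map_smul' := by
        intro s f
        simp [Finset.mul_sum, mul_assoc] }
  have hLw : ∀ i, L (w i) =
      ω1 (Fin.cons (A1 (a i)) (Fin.cons (A1 (b i)) uu1)) *
        ω2 (Fin.cons (A2 (c i)) uu2) := by
    intro i
    show (∑ z : {pq : Fin r1 × Fin r1 // pq.1 < pq.2} × Fin r2, w i z * (βc z.1 * γc z.2)) = _
    rw [Fintype.sum_prod_type]
    have hfactor : ∀ zp : {pq : Fin r1 × Fin r1 // pq.1 < pq.2},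
        ∑ s : Fin r2, w i (zp, s) * (βc zp * γc s)
        = ((A1 (a i) zp.1.1 * A1 (b i) zp.1.2 - A1 (a i) zp.1.2 * A1 (b i) zp.1.1) * βc zp) *
          (∑ s, A2 (c i) s * γc s) := by
      intro zp
      rw [Finset.mul_sum]
      refine Finset.sum_congr rfl fun s _ => ?_
      show ((A1 (a i) zp.1.1 * A1 (b i) zp.1.2 - A1 (a i) zp.1.2 * A1 (b i) zp.1.1) *
        A2 (c i) s) * (βc zp * γc s) = _
      ring
    rw [Finset.sum_congr rfl (fun zp _ => hfactor zp), ← Finset.sum_mul]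
    have h2 : ∑ s, A2 (c i) s * γc s = ω2 (Fin.cons (A2 (c i)) uu2) := (G1_expand ω2 uu2 _).symm
    have h1 : ∑ zp : {pq : Fin r1 × Fin r1 // pq.1 < pq.2},
        (A1 (a i) zp.1.1 * A1 (b i) zp.1.2 - A1 (a i) zp.1.2 * A1 (b i) zp.1.1) * βc zp
        = ω1 (Fin.cons (A1 (a i)) (Fin.cons (A1 (b i)) uu1)) := by
      rw [alt_expand ω1 uu1 (A1 (a i)) (A1 (b i))]
      exact (Finset.sum_subtype (p := fun pq : Fin r1 × Fin r1 => pq.1 < pq.2)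
        (f := fun pq => (A1 (a i) pq.1 * A1 (b i) pq.2 - A1 (a i) pq.2 * A1 (b i) pq.1) *
          ω1 (Fin.cons (Pi.single pq.1 1) (Fin.cons (Pi.single pq.2 1) uu1)))
        (Finset.univ.filter (fun pq : Fin r1 × Fin r1 => pq.1 < pq.2))
        (fun x => by simp)).symm
    rw [h1, h2]
  have hLl : L (w l) = 1 := by rw [hLw l, hω1, hω2, one_mul]
  have hsum : ∑ i, g i * L (w i) = 0 := by
    have h := congrArg L hg0
    rw [map_sum, map_zero] at h
    simp_rw [map_smul, smul_eq_mul] at h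
    exact h
  have hex : ∃ j, j ≠ l ∧ L (w j) ≠ 0 := by
    by_contra hcon
    push_neg at hcon
    have h : (∑ i, g i * L (w i)) = g l * L (w l) := Finset.sum_eq_single l
      (fun j _ hj => by rw [hcon j hj, mul_zero])
      (fun h' => absurd (Finset.mem_univ l) h')
    rw [hsum, hLl, mul_one] at h
    exact hgl h.symm
  obtain ⟨j, hjl, hLj⟩ := hex
  rw [hLw j] at hLj
  have hD1 : ω1 (Fin.cons (A1 (a j)) (Fin.cons (A1 (b j)) uu1)) ≠ 0 := left_ne_zero_of_mul hLj
  have hD2 : ω2 (Fin.cons (A2 (c j)) uu2) ≠ 0 := right_ne_zero_of_mul hLj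
  have hind1 : LinearIndependent F (Fin.cons (A1 (a j)) (Fin.cons (A1 (b j)) uu1)) := by
    by_contra h
    exact hD1 (AlternatingMap.map_linearDependent ω1 _ h)
  have hind2 : LinearIndependent F (Fin.cons (A2 (c j)) uu2) := by
    by_contra h
    exact hD2 (AlternatingMap.map_linearDependent ω2 _ h)
  have hinj1 := hind1.injective
  have hinj2 := hind2.injective
  -- disjointness
  have hajB : Sum.inl (a j) ∉ B := by
    intro hmem
    obtain ⟨k, hk⟩ := hu1surj (a j) hmem
    have he : (Fin.cons (A1 (a j)) (Fin.cons (A1 (b j)) uu1) : Fin (m1+2) → (Fin r1 → F))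
        (Fin.succ (Fin.succ k)) = (Fin.cons (A1 (a j)) (Fin.cons (A1 (b j)) uu1) :
          Fin (m1+2) → (Fin r1 → F)) 0 := by
      rw [Fin.cons_succ, Fin.cons_succ, Fin.cons_zero]
      show A1 (u1 k) = A1 (a j)
      rw [hk]
    exact Fin.succ_ne_zero _ (hinj1 he)
  have hbjB : Sum.inl (b j) ∉ B := by
    intro hmem
    obtain ⟨k, hk⟩ := hu1surj (b j) hmem
    have he : (Fin.cons (A1 (a j)) (Fin.cons (A1 (b j)) uu1) : Fin (m1+2) → (Fin r1 → F))
        (Fin.succ (Fin.succ k)) = (Fin.cons (A1 (a j)) (Fin.cons (A1 (b j)) uu1) :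
          Fin (m1+2) → (Fin r1 → F)) (Fin.succ 0) := by
      rw [Fin.cons_succ, Fin.cons_succ, Fin.cons_succ, Fin.cons_zero]
      show A1 (u1 k) = A1 (b j)
      rw [hk]
    exact Fin.succ_ne_zero _ (Fin.succ_injective _ (hinj1 he))
  have hcjB : Sum.inr (c j) ∉ B := by
    intro hmem
    obtain ⟨k, hk⟩ := hu2surj (c j) hmem
    have he : (Fin.cons (A2 (c j)) uu2 : Fin (m2+1) → (Fin r2 → F)) (Fin.succ k)
        = (Fin.cons (A2 (c j)) uu2 : Fin (m2+1) → (Fin r2 → F)) 0 := by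
      rw [Fin.cons_succ, Fin.cons_zero]
      show A2 (u2 k) = A2 (c j)
      rw [hk]
    exact Fin.succ_ne_zero _ (hinj2 he)
  have hdisjj : Disjoint (I j) B := by
    rw [hI j, Set.disjoint_left]
    intro x hx
    rcases hx with hx | hx | hx
    · rw [hx]; exact hajB
    · rw [hx]; exact hbjB
    · rw [hx]; exact hcjB
  refine ⟨j, hjl, hdisjj, ?_⟩
  rw [hIndep]
  apply (indep_decomp A1 A2 φ hφ1 hφ2 (I j ∪ B)).mpr
  constructor
  · -- U1 side
    have hcover : ∀ u : {u : U1 | Sum.inl u ∈ I j ∪ B},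
        ∃ k : Fin (m1+2), (Fin.cons (a j) (Fin.cons (b j) u1) : Fin (m1+2) → U1) k = u.1 := by
      rintro ⟨u, hu⟩
      rcases hu with hu | hu
      · rw [hI j] at hu
        rcases hu with hu | hu | hu
        · exact ⟨0, by rw [Fin.cons_zero]; exact (Sum.inl.injEq _ _ ▸ hu : u = a j).symm⟩
        · refine ⟨Fin.succ 0, ?_⟩
          rw [Fin.cons_succ, Fin.cons_zero]
          exact ((Sum.inl.injEq _ _ ▸ hu : u = b j)).symm
        · exact absurd hu (by simp)
      · obtain ⟨k, hk⟩ := hu1surj u hu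
        exact ⟨Fin.succ (Fin.succ k), by rw [Fin.cons_succ, Fin.cons_succ]; exact hk⟩
    choose θ hθ using hcover
    have hθinj : Function.Injective θ := fun x x' h =>
      Subtype.ext (by rw [← hθ x, ← hθ x', h])
    have h := hind1.comp θ hθinj
    have hcc : (Fin.cons (A1 (a j)) (Fin.cons (A1 (b j)) uu1) : Fin (m1+2) → (Fin r1 → F)) =
        (fun k : Fin (m1+2) => A1 ((Fin.cons (a j) (Fin.cons (b j) u1) : Fin (m1+2) → U1) k)) :=
      (comp_cons2 A1 (a j) (b j) u1).symm
    have heq : (Fin.cons (A1 (a j)) (Fin.cons (A1 (b j)) uu1) : Fin (m1+2) → (Fin r1 → F)) ∘ θ =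
        (fun u : {u : U1 | Sum.inl u ∈ I j ∪ B} => A1 u.1) := by
      funext u
      show (Fin.cons (A1 (a j)) (Fin.cons (A1 (b j)) uu1) : Fin (m1+2) → (Fin r1 → F)) (θ u)
        = A1 u.1
      rw [hcc]
      show A1 ((Fin.cons (a j) (Fin.cons (b j) u1) : Fin (m1+2) → U1) (θ u)) = A1 u.1
      rw [hθ u]
    rwa [heq] at h
  · -- U2 side
    have hcover : ∀ u : {u : U2 | Sum.inr u ∈ I j ∪ B},
        ∃ k : Fin (m2+1), (Fin.cons (c j) u2 : Fin (m2+1) → U2) k = u.1 := by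
      rintro ⟨u, hu⟩
      rcases hu with hu | hu
      · rw [hI j] at hu
        rcases hu with hu | hu | hu
        · exact absurd hu (by simp)
        · exact absurd hu (by simp)
        · exact ⟨0, by rw [Fin.cons_zero]; exact (Sum.inr.injEq _ _ ▸ hu : u = c j).symm⟩
      · obtain ⟨k, hk⟩ := hu2surj u hu
        exact ⟨Fin.succ k, by rw [Fin.cons_succ]; exact hk⟩
    choose θ hθ using hcover
    have hθinj : Function.Injective θ := fun x x' h =>
      Subtype.ext (by rw [← hθ x, ← hθ x', h])
    have h := hind2.comp θ hθinj
    have hcc : (Fin.cons (A2 (c j)) uu2 : Fin (m2+1) → (Fin r2 → F)) =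
        (fun k : Fin (m2+1) => A2 ((Fin.cons (c j) u2 : Fin (m2+1) → U2) k)) :=
      (comp_cons A2 (c j) u2).symm
    have heq : (Fin.cons (A2 (c j)) uu2 : Fin (m2+1) → (Fin r2 → F)) ∘ θ =
        (fun u : {u : U2 | Sum.inr u ∈ I j ∪ B} => A2 u.1) := by
      funext u
      show (Fin.cons (A2 (c j)) uu2 : Fin (m2+1) → (Fin r2 → F)) (θ u) = A2 u.1
      rw [hcc]
      show A2 ((Fin.cons (c j) u2 : Fin (m2+1) → U2) (θ u)) = A2 u.1
      rw [hθ u]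
    rwa [heq] at h
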